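/- (Lossless expansion of a Pre-LN MLP module with residual connection.) Let g(x) = x + MLP(LN(x; μ, β, ε)) on ℝ^{D_S}, where LN is LayerNorm with parameters μ, β ∈ ℝ^{D_S}, ε > 0, and MLP(y) = W₂·σ(W₁·y + b₁) + b₂ with W₁ ∈ ℝ^{H_S×D_S}, b₁ ∈ ℝ^{H_S}, W₂ ∈ ℝ^{D_S×H_S}, b₂ ∈ ℝ^{D_S} and entrywise σ : ℝ → ℝ. Let LN* be the expanded LayerNorm of dimension D_T ≥ D_S with parameters μ*[i] = η·μ[i mod D_S] for i < k·D_S, μ*[i] = η·ζ[i − k·D_S] otherwise (arbitrary ζ ∈ ℝ^r), β* = V_zero(β), ε* = η²·ε, where k = ⌊D_T/D_S⌋, r = D_T mod D_S, η = √(k·D_S/D_T). Let MLP* be an expanded MLP of input/output dimension D_T and hidden dimension H_T ≥ H_S constructed so that MLP*(V_zero(y)) = V_avg(MLP(y)) for all y ∈ ℝ^{D_S} (e.g. by row-circular/column-random expansion of W₁ with b₁* = V_circ(b₁), and row-average/column-circular expansion of W₂ with b₂* = V_avg(b₂)). Then the expanded block g*(z) = z + MLP*(LN*(z)) satisfies g*(V_avg(x))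 = V_avg(g(x)) for all x ∈ ℝ^{D_S}. -/

import Mathlib

/-- Index bound for the tail part of an expansion from dimension `DS` to `DT`. -/
theorem sub_lt_mod (DS DT i : ℕ) (hDS : 0 < DS) (hi : i < DT) (h2 : DT / DS * DS ≤ i) :
    i - DT / DS * DS < DT % DS := by
  have h := Nat.div_add_mod' DT DS
  set m := DT / DS * DS
  omega

/-- Average expansion `V_avg` from `ℝ^{DS}` to `ℝ^{DT}`. -/
noncomputable def vAvg (DS DT : ℕ) (hDS : 0 < DS) (x : Fin DS → ℝ) : Fin DT → ℝ :=
  fun i => if i.val < DT / DS * DS then x ⟨i.val % DS, Nat.mod_lt _ hDS⟩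
           else (∑ j, x j) / (DS : ℝ)

/-- Zero expansion `V_zero` from `ℝ^{DS}` to `ℝ^{DT}`. -/
def vZero (DS DT : ℕ) (hDS : 0 < DS) (x : Fin DS → ℝ) : Fin DT → ℝ :=
  fun i => if i.val < DT / DS * DS then x ⟨i.val % DS, Nat.mod_lt _ hDS⟩ else 0

/-- Circular expansion `V_circ` from `ℝ^{DS}` to `ℝ^{DT}`. -/
def vCirc (DS DT : ℕ) (hDS : 0 < DS) (x : Fin DS → ℝ) : Fin DT → ℝ :=
  fun i => x ⟨i.val % DS, Nat.mod_lt _ hDS⟩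

/-- Mean of a vector. -/
noncomputable def meanV {D : ℕ} (x : Fin D → ℝ) : ℝ := (∑ i, x i) / (D : ℝ)

/-- Population variance of a vector. -/
noncomputable def varV {D : ℕ} (x : Fin D → ℝ) : ℝ := (∑ i, (x i - meanV x) ^ 2) / (D : ℝ)

/-- LayerNorm with scale `μ`, bias `β` and constant `ε`. -/
noncomputable def layerNorm {D : ℕ} (x μ β : Fin D → ℝ) (ε : ℝ) : Fin D → ℝ :=
  fun i => μ i * (x i - meanV x) / Real.sqrt (varV x + ε) + β i

/-- `η = √(⌊D_T/D_S⌋·D_S/D_T)`. -/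
noncomputable def eta (DS DT : ℕ) : ℝ :=
  Real.sqrt (((DT / DS * DS : ℕ) : ℝ) / (DT : ℝ))

/-- The expanded scale `μ*`: `μ*[i] = η·μ[i mod D_S]` for `i < ⌊D_T/D_S⌋·D_S`,
and `μ*[i] = η·ζ[i − ⌊D_T/D_S⌋·D_S]` otherwise. -/
noncomputable def muStar (DS DT : ℕ) (hDS : 0 < DS) (η : ℝ) (μ : Fin DS → ℝ)
    (ζ : Fin (DT % DS) → ℝ) : Fin DT → ℝ :=
  fun i => if h : i.val < DT / DS * DS
    then η * μ ⟨i.val % DS, Nat.mod_lt _ hDS⟩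
    else η * ζ ⟨i.val - DT / DS * DS, sub_lt_mod DS DT i.val hDS i.isLt (Nat.not_lt.mp h)⟩


lemma sum_range_mod (DS k : ℕ) (hDS : 0 < DS) (f : Fin DS → ℝ) :
    ∑ i ∈ Finset.range (k * DS), f ⟨i % DS, Nat.mod_lt _ hDS⟩ = k * ∑ j, f j := by
  have base : ∑ j : Fin DS, f j = ∑ i ∈ Finset.range DS, f ⟨i % DS, Nat.mod_lt _ hDS⟩ := by
    rw [← Fin.sum_univ_eq_sum_range (fun n => f ⟨n % DS, Nat.mod_lt _ hDS⟩) DS]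
    exact Finset.sum_congr rfl fun j _ => by
      congr 1; exact Fin.ext (by simp [Nat.mod_eq_of_lt j.isLt])
  induction k with
  | zero => simp
  | succ k ih =>
    rw [Nat.succ_mul, Finset.sum_range_add, ih]
    have : ∀ i ∈ Finset.range DS,
        f ⟨(k * DS + i) % DS, Nat.mod_lt _ hDS⟩ = f ⟨i % DS, Nat.mod_lt _ hDS⟩ := by
      intro i hi
      congr 1; exact Fin.ext (by simp [Nat.mul_comm, Nat.add_comm, Nat.add_mul_mod_self_left])
    rw [Finset.sum_congr rfl this, ← base]
    push_cast; ring

lemma sum_expand (DS DT : ℕ) (hDS : 0 < DS) (f : Fin DS → ℝ) (c : ℝ) :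
    ∑ i : Fin DT, (if (i : ℕ) < DT / DS * DS then f ⟨(i : ℕ) % DS, Nat.mod_lt _ hDS⟩ else c)
      = ((DT / DS : ℕ) : ℝ) * ∑ j, f j + ((DT % DS : ℕ) : ℝ) * c := by
  have hm : DT / DS * DS ≤ DT := Nat.div_mul_le_self DT DS
  set m := DT / DS * DS with hmdef
  have key : ∑ i : Fin DT,
      (if (i : ℕ) < m then f ⟨(i : ℕ) % DS, Nat.mod_lt _ hDS⟩ else c)
      = ∑ n ∈ Finset.range DT, (if n < m then f ⟨n % DS, Nat.mod_lt _ hDS⟩ else c) :=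
    Fin.sum_univ_eq_sum_range (fun n => if n < m then f ⟨n % DS, Nat.mod_lt _ hDS⟩ else c) DT
  rw [key, ← Finset.sum_range_add_sum_Ico _ hm]
  have h1 : ∑ n ∈ Finset.range m, (if n < m then f ⟨n % DS, Nat.mod_lt _ hDS⟩ else c)
      = ∑ n ∈ Finset.range m, f ⟨n % DS, Nat.mod_lt _ hDS⟩ :=
    Finset.sum_congr rfl fun n hn => if_pos (Finset.mem_range.mp hn)
  have h2 : ∑ n ∈ Finset.Ico m DT, (if n < m then f ⟨n % DS, Nat.mod_lt _ hDS⟩ else c)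
      = ((DT % DS : ℕ) : ℝ) * c := by
    rw [Finset.sum_congr rfl (fun n hn => if_neg (by
      have := (Finset.mem_Ico.mp hn).1; omega))]
    rw [Finset.sum_const, Nat.card_Ico, nsmul_eq_mul]
    have hn : DT - m = DT % DS := by
      have := Nat.div_add_mod' DT DS; omega
    rw [hn]
  rw [h1, h2, hmdef, sum_range_mod DS (DT / DS) hDS f]

lemma mean_vAvg (DS DT : ℕ) (hDS : 0 < DS) (hDT : DS ≤ DT) (x : Fin DS → ℝ) :
    meanV (vAvg DS DT hDS x) = meanV x := by
  have hDT0 : 0 < DT := lt_of_lt_of_le hDS hDT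
  unfold meanV vAvg
  rw [sum_expand DS DT hDS x ((∑ j, x j) / (DS : ℝ))]
  have h : DT / DS * DS + DT % DS = DT := Nat.div_add_mod' DT DS
  have hc : ((DT / DS : ℕ) : ℝ) * (DS : ℝ) + ((DT % DS : ℕ) : ℝ) = (DT : ℝ) := by
    exact_mod_cast congrArg (Nat.cast : ℕ → ℝ) h
  have hDS' : (DS : ℝ) ≠ 0 := Nat.cast_ne_zero.mpr hDS.ne'
  have hDT' : (DT : ℝ) ≠ 0 := Nat.cast_ne_zero.mpr hDT0.ne'
  field_simp
  linear_combination (∑ j, x j) * hc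

lemma var_vAvg (DS DT : ℕ) (hDS : 0 < DS) (hDT : DS ≤ DT) (x : Fin DS → ℝ) :
    varV (vAvg DS DT hDS x) = ((DT / DS * DS : ℕ) : ℝ) / (DT : ℝ) * varV x := by
  have hDT0 : 0 < DT := lt_of_lt_of_le hDS hDT
  have hDS' : (DS : ℝ) ≠ 0 := Nat.cast_ne_zero.mpr hDS.ne'
  have hDT' : (DT : ℝ) ≠ 0 := Nat.cast_ne_zero.mpr hDT0.ne'
  unfold varV
  rw [mean_vAvg DS DT hDS hDT x]
  have hpt : ∀ i : Fin DT, (vAvg DS DT hDS x i - meanV x) ^ 2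
      = (if (i : ℕ) < DT / DS * DS
          then (fun j => (x j - meanV x) ^ 2) ⟨(i : ℕ) % DS, Nat.mod_lt _ hDS⟩
          else (0 : ℝ)) := by
    intro i
    unfold vAvg
    split
    · rfl
    · simp [meanV]
  rw [Finset.sum_congr rfl (fun i _ => hpt i), sum_expand DS DT hDS (fun j => (x j - meanV x) ^ 2) 0]
  have hcast : ((DT / DS * DS : ℕ) : ℝ) = ((DT / DS : ℕ) : ℝ) * (DS : ℝ) := by push_cast; ring
  rw [hcast]
  field_simp
  ring

lemma eta_pos (DS DT : ℕ) (hDS : 0 < DS) (hDT : DS ≤ DT) : 0 < eta DS DT := by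
  have hDT0 : 0 < DT := lt_of_lt_of_le hDS hDT
  have hk : 1 ≤ DT / DS := (Nat.one_le_div_iff hDS).mpr hDT
  have hm : 0 < DT / DS * DS := Nat.mul_pos hk hDS
  unfold eta
  apply Real.sqrt_pos.mpr
  positivity

lemma eta_sq (DS DT : ℕ) : eta DS DT ^ 2 = ((DT / DS * DS : ℕ) : ℝ) / (DT : ℝ) := by
  unfold eta
  rw [Real.sq_sqrt (by positivity)]

lemma varV_nonneg {D : ℕ} (x : Fin D → ℝ) : 0 ≤ varV x := by
  unfold varV
  positivity

lemma ln_star (DS DT : ℕ) (hDS : 0 < DS) (hDT : DS ≤ DT) (μ β : Fin DS → ℝ) (ε : ℝ)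
    (hε : 0 < ε) (ζ : Fin (DT % DS) → ℝ) (x : Fin DS → ℝ) :
    layerNorm (vAvg DS DT hDS x) (muStar DS DT hDS (eta DS DT) μ ζ)
      (vZero DS DT hDS β) ((eta DS DT) ^ 2 * ε)
      = vZero DS DT hDS (layerNorm x μ β ε) := by
  set η := eta DS DT with hη
  have hηpos : 0 < η := eta_pos DS DT hDS hDT
  have hvpos : 0 < varV x + ε := by linarith [varV_nonneg x]
  have hspos : 0 < Real.sqrt (varV x + ε) := Real.sqrt_pos.mpr hvpos
  have hvar : varV (vAvg DS DT hDS x) + η ^ 2 * ε = η ^ 2 * (varV x + ε) := by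
    rw [var_vAvg DS DT hDS hDT x, ← eta_sq DS DT]; ring
  have hsqrt : Real.sqrt (varV (vAvg DS DT hDS x) + η ^ 2 * ε)
      = η * Real.sqrt (varV x + ε) := by
    rw [hvar, Real.sqrt_mul (sq_nonneg _), Real.sqrt_sq hηpos.le]
  funext i
  unfold layerNorm vZero muStar
  rw [mean_vAvg DS DT hDS hDT x, hsqrt]
  by_cases h : (i : ℕ) < DT / DS * DS
  · rw [dif_pos h, if_pos h, if_pos h]
    unfold vAvg
    rw [if_pos h]
    field_simp
  · rw [dif_neg h, if_neg h, if_neg h]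
    unfold vAvg
    rw [if_neg h]
    simp [meanV]

lemma vAvg_add (DS DT : ℕ) (hDS : 0 < DS) (x y : Fin DS → ℝ) :
    vAvg DS DT hDS x + vAvg DS DT hDS y = vAvg DS DT hDS (x + y) := by
  funext i
  simp only [Pi.add_apply]
  unfold vAvg
  by_cases h : (i : ℕ) < DT / DS * DS
  · rw [if_pos h, if_pos h, if_pos h]; rfl
  · rw [if_neg h, if_neg h, if_neg h]
    simp [Finset.sum_add_distrib, add_div]

/-- lossless expansion of a Pre-LN MLP module with residual
connection: if `LN*` is the expanded LayerNorm and `MLP*` is any expanded MLP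
satisfying `MLP*(V_zero(y)) = V_avg(MLP(y))` for all `y`, then the expanded block
`g*(z) = z + MLP*(LN*(z))` satisfies `g*(V_avg(x)) = V_avg(x + MLP(LN(x)))`. -/
theorem stmt_16 (DS DT HS : ℕ) (hDS : 0 < DS) (hDT : DS ≤ DT)
    (μ β : Fin DS → ℝ) (ε : ℝ) (hε : 0 < ε)
    (W1 : Matrix (Fin HS) (Fin DS) ℝ) (b1 : Fin HS → ℝ)
    (W2 : Matrix (Fin DS) (Fin HS) ℝ) (b2 : Fin DS → ℝ) (σ : ℝ → ℝ)
    (ζ : Fin (DT % DS) → ℝ)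
    (MLPstar : (Fin DT → ℝ) → (Fin DT → ℝ))
    (hMLP : ∀ y : Fin DS → ℝ,
      MLPstar (vZero DS DT hDS y)
        = vAvg DS DT hDS (W2.mulVec (fun i => σ ((W1.mulVec y + b1) i)) + b2))
    (x : Fin DS → ℝ) :
    vAvg DS DT hDS x
        + MLPstar (layerNorm (vAvg DS DT hDS x) (muStar DS DT hDS (eta DS DT) μ ζ)
            (vZero DS DT hDS β) ((eta DS DT) ^ 2 * ε))
      = vAvg DS DT hDS
          (x + (W2.mulVec (fun i => σ ((W1.mulVec (layerNorm x μ β ε) + b1) i)) + b2)) := by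
  rw [ln_star DS DT hDS hDT μ β ε hε ζ x, hMLP (layerNorm x μ β ε),
    vAvg_add DS DT hDS x _]
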